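/- arXiv:1203.3233 — 5 statements merged into one kernel-verified Lean document; each statement's English description precedes it below -/
import Mathlib

section
/- For every integer p ≥ 0 and all real numbers z with 0 ≤ z < 1, the inequality (1+z)(1 - z^{2p+2}) - 2z(1 - (p+1)z^{2p} + p z^{2p+2}) > 0 holds. -/
/-- For every integer `p ≥ 0` and all real `z` with `0 ≤ z < 1`,
`(1+z)(1 - z^{2p+2}) - 2z(1 - (p+1)z^{2p} + p z^{2p+2}) > 0`. -/
theorem stmt1 (p : ℕ) (z : ℝ) (h0 : 0 ≤ z) (h1 : z < 1) :
    0 < (1 + z) * (1 - z ^ (2 * p + 2))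
      - 2 * z * (1 - ((p : ℝ) + 1) * z ^ (2 * p) + (p : ℝ) * z ^ (2 * p + 2)) := by
  have key : (1 + z) * (1 - z ^ (2 * p + 2))
      - 2 * z * (1 - ((p : ℝ) + 1) * z ^ (2 * p) + (p : ℝ) * z ^ (2 * p + 2))
      = (1 - z) * (1 + (2 * (p : ℝ) + 2) * z ^ (2 * p + 1)
          + (2 * (p : ℝ) + 1) * z ^ (2 * p + 2)) := by
    ring
  rw [key]
  have hz1 : (0:ℝ) < 1 - z := by linarith
  have h2 : (0:ℝ) < 1 + (2 * (p : ℝ) + 2) * z ^ (2 * p + 1)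
      + (2 * (p : ℝ) + 1) * z ^ (2 * p + 2) := by positivity
  exact mul_pos hz1 h2
end

section
/- Let p ≥ 0 be an integer and define B(λ,μ) = (λ^{p+1} - μ^{p+1})/(λ - μ) for λ ≠ μ and B(λ,λ) = (p+1)λ^p. Then the infimum over λ ≥ 0, μ ≥ 0 with λ² + μ² = 1 of B(λ,μ) + 2 ∂_λ B(λ,μ)·(λ ± √(λμ)) is strictly positive (for either choice of sign). -/
/-- The divided difference `B(λ,μ)` of `V(λ) = λ^{p+1}`:
`B(λ,μ) = (λ^{p+1} - μ^{p+1})/(λ - μ)` for `λ ≠ μ`, and `B(λ,λ) = (p+1)λ^p`. -/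
noncomputable def dividedDiffPow (p : ℕ) (l m : ℝ) : ℝ :=
  if l = m then ((p : ℝ) + 1) * l ^ p else (l ^ (p + 1) - m ^ (p + 1)) / (l - m)

namespace DDAux

open Finset

def Bs (p : ℕ) (l m : ℝ) : ℝ := ∑ i ∈ Finset.range (p+1), l^i * m^(p-i)

def Ds (p : ℕ) (l m : ℝ) : ℝ := ∑ i ∈ Finset.range (p+1), (i:ℝ) * l^(i-1) * m^(p-i)

lemma dd_eq (p : ℕ) (l m : ℝ) : dividedDiffPow p l m = Bs p l m := by
  unfold dividedDiffPow Bs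
  by_cases h : l = m
  · subst h
    rw [if_pos rfl]
    have : ∀ i ∈ Finset.range (p+1), l^i * l^(p-i) = l^p := by
      intro i hi
      rw [← pow_add, Nat.add_sub_cancel' (Nat.lt_succ_iff.mp (mem_range.mp hi))]
    rw [Finset.sum_congr rfl this, Finset.sum_const, card_range, nsmul_eq_mul]
    push_cast; ring
  · rw [if_neg h, eq_comm, eq_div_iff (sub_ne_zero.mpr h)]
    have := geom_sum₂_mul l m (p+1)
    simpa using this

lemma deriv_dd (p : ℕ) (m l : ℝ) :
    deriv (fun x => dividedDiffPow p x m) l = Ds p l m := by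
  have he : (fun x => dividedDiffPow p x m) = fun x => Bs p x m :=
    funext fun x => dd_eq p x m
  rw [he]
  have H : HasDerivAt (fun x => Bs p x m) (Ds p l m) l := by
    unfold Bs Ds
    apply HasDerivAt.fun_sum
    intro i _
    exact (hasDerivAt_pow i l).mul_const (m^(p-i))
  exact H.deriv

lemma Bs_succ (p : ℕ) (l m : ℝ) : Bs (p+1) l m = l^(p+1) + m * Bs p l m := by
  unfold Bs
  rw [Finset.sum_range_succ]
  have : ∀ i ∈ Finset.range (p+1), l^i * m^(p+1-i) = m * (l^i * m^(p-i)) := by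
    intro i hi
    rw [Nat.succ_sub (Nat.lt_succ_iff.mp (mem_range.mp hi)), pow_succ]
    ring
  rw [Finset.sum_congr rfl this, ← Finset.mul_sum]
  simp [add_comm]

lemma Ds_succ (p : ℕ) (l m : ℝ) : Ds (p+1) l m = Bs p l m + l * Ds p l m := by
  unfold Bs Ds
  rw [Finset.sum_range_succ']
  have h1 : ∀ i ∈ Finset.range (p+1),
      ((i+1 : ℕ):ℝ) * l^((i+1)-1) * m^(p+1-(i+1)) = l^i * m^(p-i) + l * ((i:ℝ) * l^(i-1) * m^(p-i)) := by
    intro i hi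
    have : (i+1) - 1 = i := rfl
    rw [this, Nat.succ_sub_succ]
    push_cast
    cases i with
    | zero => simp
    | succ j =>
      rw [Nat.add_sub_cancel]
      ring
  rw [Finset.sum_congr rfl h1, Finset.sum_add_distrib, ← Finset.mul_sum]
  simp

lemma key (p : ℕ) (l m : ℝ) : Bs p l m = ((p:ℝ)+1) * l^p + Ds p l m * (m - l) := by
  induction p with
  | zero => simp [Bs, Ds]
  | succ p ih =>
    rw [Bs_succ, Ds_succ, ih]
    push_cast
    ring

lemma Ds_nonneg (p : ℕ) {l m : ℝ} (hl : 0 ≤ l) (hm : 0 ≤ m) : 0 ≤ Ds p l m := by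
  apply Finset.sum_nonneg
  intro i _
  positivity

lemma Ds_ge (p : ℕ) (hp : 1 ≤ p) {l m : ℝ} (hl : 0 ≤ l) (hm : 0 ≤ m) :
    m^(p-1) ≤ Ds p l m := by
  have h1 : (1:ℕ) ∈ Finset.range (p+1) := by
    rw [Finset.mem_range]; omega
  have h0 : ∀ i ∈ Finset.range (p+1), (0:ℝ) ≤ (i:ℝ) * l^(i-1) * m^(p-i) :=
    fun i _ => mul_nonneg (mul_nonneg (Nat.cast_nonneg i) (pow_nonneg hl _)) (pow_nonneg hm _)
  have := Finset.single_le_sum h0 h1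
  simpa [Ds] using this

end DDAux

set_option maxHeartbeats 1000000 in
/-- For either choice of sign, the infimum over `λ, μ ≥ 0` with `λ² + μ² = 1` of
`B(λ,μ) + 2 ∂_λ B(λ,μ)·(λ ± √(λμ))` is strictly positive. -/
theorem stmt2 (p : ℕ) (sgn : ℝ) (hsgn : sgn = 1 ∨ sgn = -1) :
    ∃ c > (0 : ℝ), ∀ l m : ℝ, 0 ≤ l → 0 ≤ m → l ^ 2 + m ^ 2 = 1 →
      c ≤ dividedDiffPow p l m
        + 2 * deriv (fun x => dividedDiffPow p x m) l * (l + sgn * Real.sqrt (l * m)) := by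
  refine ⟨(1/2)^p / 36, by positivity, ?_⟩
  intro l m hl hm hlm
  rw [DDAux.dd_eq, DDAux.deriv_dd]
  have hs2 : sgn^2 = 1 := by rcases hsgn with h|h <;> rw [h] <;> norm_num
  have hl1 : l ≤ 1 := by nlinarith
  have hm1 : m ≤ 1 := by nlinarith
  have hD : 0 ≤ DDAux.Ds p l m := DDAux.Ds_nonneg p hl hm
  have hsql : Real.sqrt l ^ 2 = l := Real.sq_sqrt hl
  have hsqm : Real.sqrt m ^ 2 = m := Real.sq_sqrt hm
  have hslm : Real.sqrt (l*m) = Real.sqrt l * Real.sqrt m := Real.sqrt_mul hl m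
  have hiden : DDAux.Bs p l m + 2 * DDAux.Ds p l m * (l + sgn * Real.sqrt (l*m))
      = ((p:ℝ)+1) * l^p + DDAux.Ds p l m * (Real.sqrt m + sgn * Real.sqrt l)^2 := by
    rw [DDAux.key p l m, hslm]
    linear_combination (-(DDAux.Ds p l m)) * hsqm - DDAux.Ds p l m * sgn^2 * hsql
      - DDAux.Ds p l m * l * hs2
  rw [hiden]
  have hterm : 0 ≤ DDAux.Ds p l m * (Real.sqrt m + sgn * Real.sqrt l)^2 := by positivity
  have hpnn : (0:ℝ) ≤ (p:ℝ) := Nat.cast_nonneg p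
  rcases le_or_gt (1/2 : ℝ) l with hhalf | hhalf
  · have h1 : ((1:ℝ)/2)^p ≤ l^p := pow_le_pow_left₀ (by norm_num) hhalf p
    have h2 : ((1:ℝ)/2)^p / 36 ≤ ((p:ℝ)+1) * l^p := by nlinarith [pow_nonneg hl p]
    linarith
  · rcases Nat.eq_zero_or_pos p with rfl | hp
    · norm_num
      linarith
    · have hm86 : 86/100 ≤ m := by nlinarith
      have hml : 1/3 ≤ m - l := by linarith
      have h1 : Real.sqrt l ≤ Real.sqrt m := Real.sqrt_le_sqrt (by linarith)
      have h2 : Real.sqrt m ≤ 1 := Real.sqrt_le_one.mpr hm1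
      have h3 : 0 ≤ Real.sqrt l := Real.sqrt_nonneg l
      have h4 : 0 ≤ Real.sqrt m := Real.sqrt_nonneg m
      have hprod : (Real.sqrt m - Real.sqrt l) * (Real.sqrt m + Real.sqrt l) = m - l := by
        linear_combination hsqm - hsql
      have hdiff : 1/6 ≤ Real.sqrt m - Real.sqrt l := by
        nlinarith [hprod, hml, h1, h2, h3, h4]
      have hsq : 1/36 ≤ (Real.sqrt m + sgn * Real.sqrt l)^2 := by
        have e1 : ((1:ℝ)/6)^2 ≤ (Real.sqrt m - Real.sqrt l)^2 :=
          pow_le_pow_left₀ (by norm_num) hdiff 2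
        have e2 : 0 ≤ Real.sqrt l * Real.sqrt m := mul_nonneg h3 h4
        rcases hsgn with rfl | rfl
        · nlinarith [e1, e2]
        · nlinarith [e1]
      have hDlb : ((1:ℝ)/2)^(p-1) ≤ DDAux.Ds p l m := by
        refine le_trans ?_ (DDAux.Ds_ge p hp hl hm)
        exact pow_le_pow_left₀ (by norm_num) (by linarith) (p-1)
      have hDlb2 : ((1:ℝ)/2)^p ≤ DDAux.Ds p l m := by
        refine le_trans ?_ hDlb
        exact pow_le_pow_of_le_one (by norm_num) (by norm_num) (Nat.sub_le p 1)
      have hmain : ((1:ℝ)/2)^p / 36 ≤ DDAux.Ds p l m * (Real.sqrt m + sgn * Real.sqrt l)^2 := by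
        calc ((1:ℝ)/2)^p / 36 = ((1:ℝ)/2)^p * (1/36) := by ring
        _ ≤ DDAux.Ds p l m * (Real.sqrt m + sgn * Real.sqrt l)^2 := by
            apply mul_le_mul hDlb2 hsq (by norm_num) hD
      have hlp : 0 ≤ ((p:ℝ)+1) * l^p := by positivity
      linarith
end

section
/- Let a(ξ,ω) = (2 + τ²m²) cos ω − (2/n) Σ_{j=1}^n cos ξ_j with τ, m > 0. If ω ∈ ℂ has Im ω ≠ 0 and Re ω ∉ {0, π}, then Im a(ξ,ω) ≠ 0 for all ξ ∈ 𝕋ⁿ; if Re ω ∈ {0, π} and Im ω ≠ 0, then |Re a(ξ,ω)| ≥ τ²m². In particular a(ξ,ω) ≠ 0 for all ξ ∈ 𝕋ⁿ whenever ω ∈ ℂ \ ℝ. -/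
/-- Non-vanishing of the symbol `a(ξ,ω) = (2+τ²m²) cos ω − (2/n) Σ_j cos ξ_j` for
non-real `ω`: if `Im ω ≠ 0` and `Re ω ∉ {0, π}` (mod 2π, i.e. `Re ω ∉ πℤ`) then
`Im a(ξ,ω) ≠ 0`; if `Re ω ∈ πℤ` and `Im ω ≠ 0` then `|Re a(ξ,ω)| ≥ τ²m²`;
in particular `a(ξ,ω) ≠ 0` for all `ξ ∈ 𝕋ⁿ` whenever `ω ∈ ℂ \ ℝ`. -/
theorem stmt9 (n : ℕ) (hn : 0 < n) (τ m : ℝ) (hτ : 0 < τ) (hm : 0 < m) (ω : ℂ) :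
    (ω.im ≠ 0 → (∀ k : ℤ, ω.re ≠ k * Real.pi) → ∀ ξ : Fin n → ℝ,
        (((2 : ℂ) + (τ : ℂ) ^ 2 * (m : ℂ) ^ 2) * Complex.cos ω
          - (2 / (n : ℂ)) * ∑ j, Complex.cos (ξ j : ℂ)).im ≠ 0)
    ∧ (ω.im ≠ 0 → (∃ k : ℤ, ω.re = k * Real.pi) → ∀ ξ : Fin n → ℝ,
        τ ^ 2 * m ^ 2 ≤
          |(((2 : ℂ) + (τ : ℂ) ^ 2 * (m : ℂ) ^ 2) * Complex.cos ω
            - (2 / (n : ℂ)) * ∑ j, Complex.cos (ξ j : ℂ)).re|)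
    ∧ (ω.im ≠ 0 → ∀ ξ : Fin n → ℝ,
        ((2 : ℂ) + (τ : ℂ) ^ 2 * (m : ℂ) ^ 2) * Complex.cos ω
          - (2 / (n : ℂ)) * ∑ j, Complex.cos (ξ j : ℂ) ≠ 0) := by
  have hA0 : (0:ℝ) < 2 + τ^2*m^2 := by positivity
  have hc : (2 : ℂ) + (τ : ℂ)^2*(m:ℂ)^2 = ((2 + τ^2*m^2 : ℝ) : ℂ) := by push_cast; ring
  have hsum : ∀ ξ : Fin n → ℝ, (2 / (n : ℂ)) * ∑ j, Complex.cos (ξ j : ℂ)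
      = (((2 / n) * ∑ j, Real.cos (ξ j) : ℝ) : ℂ) := by
    intro ξ; push_cast [Complex.ofReal_cos]; ring
  have hform : ∀ ξ : Fin n → ℝ,
      ((2 : ℂ) + (τ : ℂ) ^ 2 * (m : ℂ) ^ 2) * Complex.cos ω
          - (2 / (n : ℂ)) * ∑ j, Complex.cos (ξ j : ℂ)
      = (((2 + τ^2*m^2) * (Real.cos ω.re * Real.cosh ω.im)
            - (2 / n) * ∑ j, Real.cos (ξ j) : ℝ) : ℂ)
        + ((-((2 + τ^2*m^2) * (Real.sin ω.re * Real.sinh ω.im)) : ℝ) : ℂ) * Complex.I := by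
    intro ξ
    rw [Complex.cos_eq, hc, hsum ξ]
    push_cast [Complex.ofReal_cos, Complex.ofReal_sin, Complex.ofReal_cosh,
      Complex.ofReal_sinh]
    ring
  have hre : ∀ ξ : Fin n → ℝ,
      (((2 : ℂ) + (τ : ℂ) ^ 2 * (m : ℂ) ^ 2) * Complex.cos ω
          - (2 / (n : ℂ)) * ∑ j, Complex.cos (ξ j : ℂ)).re
      = (2 + τ^2*m^2) * (Real.cos ω.re * Real.cosh ω.im)
          - (2 / n) * ∑ j, Real.cos (ξ j) := by
    intro ξ; rw [hform ξ]; simp only [Complex.add_re, Complex.add_im, Complex.ofReal_re, Complex.ofReal_im, Complex.mul_re, Complex.mul_im, Complex.I_re, Complex.I_im]; ring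
  have him : ∀ ξ : Fin n → ℝ,
      (((2 : ℂ) + (τ : ℂ) ^ 2 * (m : ℂ) ^ 2) * Complex.cos ω
          - (2 / (n : ℂ)) * ∑ j, Complex.cos (ξ j : ℂ)).im
      = -((2 + τ^2*m^2) * (Real.sin ω.re * Real.sinh ω.im)) := by
    intro ξ; rw [hform ξ]; simp only [Complex.add_re, Complex.add_im, Complex.ofReal_re, Complex.ofReal_im, Complex.mul_re, Complex.mul_im, Complex.I_re, Complex.I_im]; ring
  have part1 : ω.im ≠ 0 → (∀ k : ℤ, ω.re ≠ k * Real.pi) → ∀ ξ : Fin n → ℝ,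
      (((2 : ℂ) + (τ : ℂ) ^ 2 * (m : ℂ) ^ 2) * Complex.cos ω
          - (2 / (n : ℂ)) * ∑ j, Complex.cos (ξ j : ℂ)).im ≠ 0 := by
    intro h1 h2 ξ
    rw [him ξ]
    have hs : Real.sin ω.re ≠ 0 := by
      intro h
      rcases Real.sin_eq_zero_iff.mp h with ⟨k, hk⟩
      exact h2 k hk.symm
    have hsh : Real.sinh ω.im ≠ 0 := fun h => h1 (Real.sinh_eq_zero.mp h)
    intro h
    rcases mul_eq_zero.mp (neg_eq_zero.mp h) with h | h
    · exact absurd h hA0.ne'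
    · rcases mul_eq_zero.mp h with h | h
      · exact hs h
      · exact hsh h
  have part2 : ω.im ≠ 0 → (∃ k : ℤ, ω.re = k * Real.pi) → ∀ ξ : Fin n → ℝ,
      τ ^ 2 * m ^ 2 ≤
        |(((2 : ℂ) + (τ : ℂ) ^ 2 * (m : ℂ) ^ 2) * Complex.cos ω
          - (2 / (n : ℂ)) * ∑ j, Complex.cos (ξ j : ℂ)).re| := by
    rintro h1 ⟨k, hk⟩ ξ
    rw [hre ξ]
    have hcos : |Real.cos ω.re| = 1 := by rw [hk]; exact Real.abs_cos_int_mul_pi k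
    have hcosh : 1 < Real.cosh ω.im := Real.one_lt_cosh.mpr h1
    have hS : |∑ j, Real.cos (ξ j)| ≤ (n : ℝ) := by
      calc |∑ j, Real.cos (ξ j)| ≤ ∑ j, |Real.cos (ξ j)| :=
            Finset.abs_sum_le_sum_abs _ _
        _ ≤ ∑ _j : Fin n, (1 : ℝ) :=
            Finset.sum_le_sum fun j _ => Real.abs_cos_le_one _
        _ = n := by simp
    have hn' : (0:ℝ) < n := by exact_mod_cast hn
    have habs1 : |(2 + τ^2*m^2) * (Real.cos ω.re * Real.cosh ω.im)|
        = (2 + τ^2*m^2) * Real.cosh ω.im := by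
      rw [abs_mul, abs_mul, hcos, one_mul, abs_of_pos hA0,
        abs_of_pos (Real.cosh_pos ω.im)]
    have habs2 : |(2 / n) * ∑ j, Real.cos (ξ j)| ≤ 2 := by
      rw [abs_mul]
      have : |(2 / n : ℝ)| = 2 / n := abs_of_pos (by positivity)
      rw [this]
      calc (2 / n : ℝ) * |∑ j, Real.cos (ξ j)| ≤ (2 / n) * n := by
            apply mul_le_mul_of_nonneg_left hS (by positivity)
        _ = 2 := by field_simp
    have key := abs_sub_abs_le_abs_sub
      ((2 + τ^2*m^2) * (Real.cos ω.re * Real.cosh ω.im))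
      ((2 / n) * ∑ j, Real.cos (ξ j))
    rw [habs1] at key
    nlinarith [key, habs2, hcosh, hA0]
  refine ⟨part1, part2, ?_⟩
  intro h1 ξ
  by_cases h2 : ∀ k : ℤ, ω.re ≠ k * Real.pi
  · intro h
    exact part1 h1 h2 ξ (by rw [h]; simp)
  · push_neg at h2
    intro h
    have := part2 h1 h2 ξ
    rw [h] at this
    simp at this
    have hpos : (0:ℝ) < τ^2*m^2 := by positivity
    linarith
end

section
/- Let ω_m = arccos((1+τ²m²/2)^{-1}) and a(ξ,ω) = (2+τ²m²)cos ω − (2/n)Σ_{j=1}^n cos ξ_j. For 1 ≤ n ≤ 4, the function ξ ↦ 1/a(ξ,ω) belongs to L²(𝕋ⁿ) if and only if ω ∈ (−ω_m, ω_m) ∪ (π−ω_m, π+ω_m). -/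
open MeasureTheory Set Real
open scoped ENNReal NNReal

lemma cos_lip (a b : ℝ) : |Real.cos a - Real.cos b| ≤ |a - b| := by
  rw [Real.cos_sub_cos, abs_mul, abs_mul]
  have h1 : |Real.sin ((a+b)/2)| ≤ 1 := Real.abs_sin_le_one _
  have h2 : |Real.sin ((a-b)/2)| ≤ |(a-b)/2| := Real.abs_sin_le_abs
  have h3 : |(a-b)/2| = |a-b|/2 := by rw [abs_div]; norm_num
  have h4 : |(-2:ℝ)| = 2 := by norm_num
  rw [h4]
  nlinarith [abs_nonneg (Real.sin ((a-b)/2)), abs_nonneg (a-b), abs_nonneg (Real.sin ((a+b)/2))]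

lemma lintegral_top_of_pieces {α : Type*} [MeasurableSpace α] {μ : Measure α}
    {s : Set α} {f : α → ℝ≥0∞} {A : ℕ → Set α} {c : ℝ≥0∞}
    (hmeas : ∀ k, MeasurableSet (A k))
    (hdisj : ∀ j k, j < k → Disjoint (A j) (A k))
    (hsub : ∀ k, A k ⊆ s) (hc : c ≠ 0)
    (hbound : ∀ k, c ≤ ∫⁻ x in A k, f x ∂μ) :
    ∫⁻ x in s, f x ∂μ = ⊤ := by
  have hd : Pairwise (Function.onFun Disjoint A) := by
    intro j k hjk
    rcases lt_or_gt_of_ne hjk with h | h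
    · exact hdisj j k h
    · exact (hdisj k j h).symm
  refine top_le_iff.mp ?_
  calc (⊤:ℝ≥0∞) = ∑' _ : ℕ, c := (ENNReal.tsum_const_eq_top_of_ne_zero hc).symm
    _ ≤ ∑' k, ∫⁻ x in A k, f x ∂μ := ENNReal.tsum_le_tsum hbound
    _ = ∫⁻ x in ⋃ k, A k, f x ∂μ := (lintegral_iUnion hmeas hd f).symm
    _ ≤ ∫⁻ x in s, f x ∂μ := lintegral_mono_set (iUnion_subset hsub)

lemma one_dim_div (a b c : ℝ) (hab : a < b) (hc : 0 < c) :
    ∫⁻ x in Ioc a b, ENNReal.ofReal ((c * (x - a))⁻¹ ^ 2) = ⊤ := by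
  set ε := b - a with hεdef
  have hε0 : 0 < ε := by simp only [hεdef]; linarith
  have hεne : ε ≠ 0 := ne_of_gt hε0
  have hcne : c ≠ 0 := ne_of_gt hc
  apply lintegral_top_of_pieces (A := fun k => Ioc (a + ε / 2 ^ (k+1)) (a + ε / 2 ^ k))
      (c := ENNReal.ofReal ((c * ε)⁻¹ ^ 2 * (ε / 2)))
  · intro k; exact measurableSet_Ioc
  · intro j k hjk
    apply Set.disjoint_left.mpr
    intro x hxj hxk
    have hpow : (2:ℝ) ^ (j+1) ≤ 2 ^ k := pow_le_pow_right₀ one_le_two hjk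
    have h1 : ε / 2 ^ k ≤ ε / 2 ^ (j+1) :=
      div_le_div_of_nonneg_left hε0.le (by positivity) hpow
    have := hxj.1
    have := hxk.2
    linarith
  · intro k
    intro x hx
    have h2k : (1:ℝ) ≤ 2 ^ k := one_le_pow₀ (by norm_num)
    have h1 : ε / 2 ^ k ≤ ε := div_le_self hε0.le h2k
    have hp : (0:ℝ) < ε / 2 ^ (k+1) := by positivity
    constructor
    · have := hx.1; linarith
    · have := hx.2; simp only [hεdef] at h1 ⊢; linarith
  · simp only [ne_eq, ENNReal.ofReal_eq_zero, not_le]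
    positivity
  · intro k
    set t : ℝ := 2 ^ k with ht
    have ht1 : (1:ℝ) ≤ t := one_le_pow₀ (by norm_num)
    have ht0 : (0:ℝ) < t := by positivity
    have hlen : a + ε / 2 ^ k - (a + ε / 2 ^ (k+1)) = ε / (2 * t) := by
      rw [pow_succ]; field_simp; ring
    have hkey : ((c * (ε / t))⁻¹) ^ 2 * (ε / (2 * t)) = ((c * ε)⁻¹ ^ 2 * (ε / 2)) * t := by
      field_simp
    calc ENNReal.ofReal ((c * ε)⁻¹ ^ 2 * (ε / 2))
        ≤ ENNReal.ofReal (((c * (ε / t))⁻¹) ^ 2 * (ε / (2 * t))) := by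
          apply ENNReal.ofReal_le_ofReal
          rw [hkey]
          exact le_mul_of_one_le_right (by positivity) ht1
      _ = ENNReal.ofReal (((c * (ε / t))⁻¹) ^ 2) * ENNReal.ofReal (ε / (2 * t)) :=
          ENNReal.ofReal_mul (by positivity)
      _ = ENNReal.ofReal (((c * (ε / t))⁻¹) ^ 2) * volume (Ioc (a + ε / 2 ^ (k+1)) (a + ε / 2 ^ k)) := by
          rw [Real.volume_Ioc, hlen]
      _ = ∫⁻ _ in Ioc (a + ε / 2 ^ (k+1)) (a + ε / 2 ^ k), ENNReal.ofReal (((c * (ε / t))⁻¹) ^ 2) :=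
          (setLIntegral_const _ _).symm
      _ ≤ ∫⁻ x in Ioc (a + ε / 2 ^ (k+1)) (a + ε / 2 ^ k), ENNReal.ofReal ((c * (x - a))⁻¹ ^ 2) := by
          apply setLIntegral_mono' measurableSet_Ioc
          intro x hx
          apply ENNReal.ofReal_le_ofReal
          have hx1 : 0 < x - a := by
            have := hx.1
            have hp : (0:ℝ) < ε / 2 ^ (k+1) := by positivity
            linarith
          have hx2 : x - a ≤ ε / t := by have := hx.2; rw [ht]; linarith
          have hmul : c * (x - a) ≤ c * (ε / t) := mul_le_mul_of_nonneg_left hx2 hc.le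
          have hpos : 0 < c * (x - a) := by positivity
          have hinv : (c * (ε / t))⁻¹ ≤ (c * (x - a))⁻¹ := inv_anti₀ hpos hmul
          exact pow_le_pow_left₀ (by positivity) hinv 2

lemma one_dim_cos (b c : ℝ) (hb : |b| < 1) (hc : 0 < c) :
    ∫⁻ x in Ioc 0 (2 * π), ENNReal.ofReal ((c * (b - Real.cos x))⁻¹ ^ 2) = ⊤ := by
  obtain ⟨hb1, hb2⟩ := abs_lt.mp hb
  set θ := Real.arccos b with hθdef
  have hθ1 : 0 < θ := Real.arccos_pos.mpr hb2
  have hθ2 : θ < π := by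
    rcases lt_or_eq_of_le (Real.arccos_le_pi b) with h | h
    · exact h
    · exact absurd (Real.arccos_eq_pi.mp h) (by linarith)
  have hcosθ : Real.cos θ = b := Real.cos_arccos hb1.le hb2.le
  refine top_le_iff.mp ?_
  calc (⊤:ℝ≥0∞) = ∫⁻ x in Ioc θ π, ENNReal.ofReal ((c * (x - θ))⁻¹ ^ 2) :=
        (one_dim_div θ π c hθ2 hc).symm
    _ ≤ ∫⁻ x in Ioc θ π, ENNReal.ofReal ((c * (b - Real.cos x))⁻¹ ^ 2) := by
        apply setLIntegral_mono' measurableSet_Ioc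
        intro x hx
        apply ENNReal.ofReal_le_ofReal
        have hx1 : θ < x := hx.1
        have hx2 : x ≤ π := hx.2
        have hcos : Real.cos x < b := by
          rw [← hcosθ]
          exact Real.strictAntiOn_cos ⟨hθ1.le, hθ2.le⟩ ⟨by linarith, hx2⟩ hx1
        have hle : b - Real.cos x ≤ x - θ := by
          have h := cos_lip θ x
          rw [hcosθ] at h
          have h2 : b - Real.cos x ≤ |b - Real.cos x| := le_abs_self _
          have h3 : |θ - x| = x - θ := by rw [abs_sub_comm]; exact abs_of_pos (by linarith)
          linarith
        have hpos : 0 < c * (b - Real.cos x) := mul_pos hc (by linarith)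
        have hmul : c * (b - Real.cos x) ≤ c * (x - θ) := mul_le_mul_of_nonneg_left hle hc.le
        have hxθ : (0:ℝ) < x - θ := by linarith
        have hinv : (c * (x - θ))⁻¹ ≤ (c * (b - Real.cos x))⁻¹ := inv_anti₀ hpos hmul
        exact pow_le_pow_left₀ (by positivity) hinv 2
    _ ≤ ∫⁻ x in Ioc 0 (2 * π), ENNReal.ofReal ((c * (b - Real.cos x))⁻¹ ^ 2) :=
        lintegral_mono_set (Ioc_subset_Ioc hθ1.le (by linarith [Real.pi_pos]))

lemma edge_div (n : ℕ) (hn1 : 1 ≤ n) (hn4 : n ≤ 4) (θ : ℝ) (hθl : π ≤ θ) (hθu : θ ≤ 2 * π)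
    (F : (Fin n → ℝ) → ℝ)
    (hF0 : ∀ ξ : Fin n → ℝ, (∀ j, ξ j ∈ Ioo (θ - π) θ) → F ξ ≠ 0)
    (hFle : ∀ ξ : Fin n → ℝ, |F ξ| ≤ (1 / (n:ℝ)) * ∑ j, (ξ j - θ) ^ 2) :
    ∫⁻ ξ in Set.pi univ (fun _ : Fin n => Ioc (0:ℝ) (2 * π)),
      ENNReal.ofReal ((F ξ)⁻¹ ^ 2) = ⊤ := by
  have hπ : (0:ℝ) < π := Real.pi_pos
  have hnR : (0:ℝ) < (n:ℝ) := by exact_mod_cast hn1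
  set i0 : Fin n := ⟨0, hn1⟩ with hi0
  apply lintegral_top_of_pieces
      (A := fun k => Set.pi univ (fun _ : Fin n => Ioc (θ - π / 2 ^ k) (θ - π / 2 ^ (k+1))))
      (c := ENNReal.ofReal ((π:ℝ) ^ n / (π ^ 4 * 2 ^ n)))
  · intro k; exact MeasurableSet.univ_pi (fun _ => measurableSet_Ioc)
  · intro j k hjk
    apply Set.disjoint_left.mpr
    intro ξ hξj hξk
    have h1 := (hξj i0 (mem_univ i0)).2
    have h2 := (hξk i0 (mem_univ i0)).1
    have hpow : (2:ℝ) ^ (j+1) ≤ 2 ^ k := pow_le_pow_right₀ one_le_two hjk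
    have h3 : π / 2 ^ k ≤ π / 2 ^ (j+1) :=
      div_le_div_of_nonneg_left hπ.le (by positivity) hpow
    linarith
  · intro k ξ hξ j _
    have h1 := (hξ j (mem_univ j)).1
    have h2 := (hξ j (mem_univ j)).2
    have h2k : (1:ℝ) ≤ 2 ^ k := one_le_pow₀ (by norm_num)
    have h3 : π / 2 ^ k ≤ π := div_le_self hπ.le h2k
    have h4 : (0:ℝ) < π / 2 ^ (k+1) := by positivity
    exact ⟨by linarith, by linarith⟩
  · simp only [ne_eq, ENNReal.ofReal_eq_zero, not_le]
    positivity
  · intro k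
    set t : ℝ := 2 ^ k with ht
    have ht1 : (1:ℝ) ≤ t := one_le_pow₀ (by norm_num)
    have ht0 : (0:ℝ) < t := by positivity
    set Ak := Set.pi univ (fun _ : Fin n => Ioc (θ - π / 2 ^ k) (θ - π / 2 ^ (k+1))) with hAk
    -- measure of Ak
    have hlen : θ - π / 2 ^ (k+1) - (θ - π / 2 ^ k) = π / (2 * t) := by
      rw [pow_succ]; field_simp; ring
    have hvol : volume Ak = ENNReal.ofReal ((π / (2 * t)) ^ n) := by
      rw [hAk, volume_pi_pi]
      simp only [Real.volume_Ioc, hlen]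
      rw [Finset.prod_const, Finset.card_univ, Fintype.card_fin,
        ENNReal.ofReal_pow (by positivity)]
    -- pointwise bound on Ak
    have hAkmeas : MeasurableSet Ak := MeasurableSet.univ_pi (fun _ => measurableSet_Ioc)
    have hptwise : ∀ ξ ∈ Ak,
        ENNReal.ofReal (((((π:ℝ) / t) ^ 2) ^ 2)⁻¹) ≤ ENNReal.ofReal ((F ξ)⁻¹ ^ 2) := by
      intro ξ hξ
      apply ENNReal.ofReal_le_ofReal
      have hmem : ∀ j, ξ j ∈ Ioo (θ - π) θ := by
        intro j
        have h1 := (hξ j (mem_univ j)).1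
        have h2 := (hξ j (mem_univ j)).2
        have h2k : (1:ℝ) ≤ 2 ^ k := one_le_pow₀ (by norm_num)
        have h3 : π / 2 ^ k ≤ π := div_le_self hπ.le h2k
        have h4 : (0:ℝ) < π / 2 ^ (k+1) := by positivity
        exact ⟨by linarith, by linarith⟩
      have hFne : F ξ ≠ 0 := hF0 ξ hmem
      have hsq : ∀ j : Fin n, (ξ j - θ) ^ 2 ≤ (π / t) ^ 2 := by
        intro j
        have h1 := (hξ j (mem_univ j)).1
        have h2 := (hξ j (mem_univ j)).2
        have h4 : (0:ℝ) < π / (2 * t) := by positivity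
        have h5 : π / 2 ^ (k+1) = π / (2 * t) := by rw [ht, pow_succ]; ring_nf
        have h6 : (0:ℝ) < π / t := by positivity
        apply sq_le_sq'
        · rw [ht] at *; linarith
        · rw [h5] at h2; rw [ht] at *; linarith
      have hsum : ∑ j, (ξ j - θ) ^ 2 ≤ (n:ℝ) * (π / t) ^ 2 := by
        calc ∑ j, (ξ j - θ) ^ 2 ≤ ∑ _j : Fin n, (π / t) ^ 2 :=
              Finset.sum_le_sum (fun j _ => hsq j)
          _ = (n:ℝ) * (π / t) ^ 2 := by
              rw [Finset.sum_const, Finset.card_univ, Fintype.card_fin, nsmul_eq_mul]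
      have hFabs : |F ξ| ≤ (π / t) ^ 2 := by
        calc |F ξ| ≤ (1 / (n:ℝ)) * ∑ j, (ξ j - θ) ^ 2 := hFle ξ
          _ ≤ (1 / (n:ℝ)) * ((n:ℝ) * (π / t) ^ 2) := by
              apply mul_le_mul_of_nonneg_left hsum
              positivity
          _ = (π / t) ^ 2 := by field_simp
      have hF2pos : 0 < F ξ ^ 2 := lt_of_le_of_ne (sq_nonneg _) (Ne.symm (pow_ne_zero 2 hFne))
      have hF2le : F ξ ^ 2 ≤ ((π / t) ^ 2) ^ 2 := by
        calc F ξ ^ 2 = |F ξ| ^ 2 := (sq_abs _).symm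
          _ ≤ ((π / t) ^ 2) ^ 2 := pow_le_pow_left₀ (abs_nonneg _) hFabs 2
      rw [inv_pow]
      exact inv_anti₀ hF2pos hF2le
    have hkey : ((((π:ℝ) / t) ^ 2) ^ 2)⁻¹ * (π / (2 * t)) ^ n
        = ((π:ℝ) ^ n / (π ^ 4 * 2 ^ n)) * (t ^ 4 / t ^ n) := by
      have e1 : ((π:ℝ) / (2 * t)) ^ n = π ^ n / (2 ^ n * t ^ n) := by
        rw [div_pow, mul_pow]
      rw [e1]
      field_simp
    have htpow : (1:ℝ) ≤ t ^ 4 / t ^ n := by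
      rw [one_le_div (by positivity)]
      exact pow_le_pow_right₀ ht1 hn4
    calc ENNReal.ofReal ((π:ℝ) ^ n / (π ^ 4 * 2 ^ n))
        ≤ ENNReal.ofReal (((((π:ℝ) / t) ^ 2) ^ 2)⁻¹ * (π / (2 * t)) ^ n) := by
          apply ENNReal.ofReal_le_ofReal
          rw [hkey]
          exact le_mul_of_one_le_right (by positivity) htpow
      _ = ENNReal.ofReal (((((π:ℝ) / t) ^ 2) ^ 2)⁻¹) * ENNReal.ofReal ((π / (2 * t)) ^ n) :=
          ENNReal.ofReal_mul (by positivity)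
      _ = ENNReal.ofReal (((((π:ℝ) / t) ^ 2) ^ 2)⁻¹) * volume Ak := by rw [hvol]
      _ = ∫⁻ _ in Ak, ENNReal.ofReal (((((π:ℝ) / t) ^ 2) ^ 2)⁻¹) := (setLIntegral_const _ _).symm
      _ ≤ ∫⁻ ξ in Ak, ENNReal.ofReal ((F ξ)⁻¹ ^ 2) := setLIntegral_mono' hAkmeas hptwise

lemma interior_div (N : ℕ) (K : ℝ) (hK : |K| < 2) :
    ∫⁻ ξ in Set.pi univ (fun _ : Fin (N+1) => Ioc (0:ℝ) (2 * π)),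
      ENNReal.ofReal ((K - (2 / ((N+1 : ℕ) : ℝ)) * ∑ j, Real.cos (ξ j))⁻¹ ^ 2) = ⊤ := by
  have hπ : (0:ℝ) < π := Real.pi_pos
  set n : ℝ := ((N+1 : ℕ) : ℝ) with hn
  have hn0 : (0:ℝ) < n := by positivity
  obtain ⟨hK1, hK2⟩ := abs_lt.mp hK
  -- the function on the product space
  set g : ℝ × (Fin N → ℝ) → ℝ≥0∞ := fun p =>
    ENNReal.ofReal ((K - (2 / n) * (Real.cos p.1 + ∑ j, Real.cos (p.2 j)))⁻¹ ^ 2) with hg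
  have hgmeas : Measurable g := by
    apply ENNReal.measurable_ofReal.comp
    apply Measurable.pow_const
    apply Measurable.inv
    apply Measurable.const_sub
    apply Measurable.const_mul
    exact (Real.measurable_cos.comp measurable_fst).add
      (Finset.measurable_sum Finset.univ
        (fun j _ => Real.measurable_cos.comp ((measurable_pi_apply j).comp measurable_snd)))
  set e := MeasurableEquiv.piFinSuccAbove (fun _ : Fin (N+1) => ℝ) 0 with he
  have hmp : MeasurePreserving e volume volume := volume_preserving_piFinSuccAbove _ 0
  have hbox : Set.pi univ (fun _ : Fin (N+1) => Ioc (0:ℝ) (2 * π))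
      = e ⁻¹' ((Ioc (0:ℝ) (2 * π)) ×ˢ (Set.pi univ fun _ : Fin N => Ioc (0:ℝ) (2 * π))) := by
    ext ξ
    simp only [Set.mem_pi, mem_univ, forall_true_left, Set.mem_preimage, Set.mem_prod, he,
      MeasurableEquiv.piFinSuccAbove_apply, Fin.insertNthEquiv, Equiv.coe_fn_symm_mk]
    constructor
    · intro h
      exact ⟨h 0, fun j => h (Fin.succAbove 0 j)⟩
    · intro h i
      rcases Fin.eq_zero_or_eq_succ i with rfl | ⟨j, rfl⟩
      · exact h.1
      · have h2 := h.2 j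
        simpa [Fin.removeNth, Fin.zero_succAbove] using h2
  have hcomp : ∀ ξ : Fin (N+1) → ℝ,
      ENNReal.ofReal ((K - (2 / n) * ∑ j, Real.cos (ξ j))⁻¹ ^ 2) = g (e ξ) := by
    intro ξ
    have hsum : ∑ j, Real.cos (ξ j) = Real.cos (ξ 0) + ∑ j : Fin N, Real.cos (ξ (Fin.succAbove 0 j)) :=
      Fin.sum_univ_succAbove (fun i => Real.cos (ξ i)) 0
    simp only [hg, he, MeasurableEquiv.piFinSuccAbove_apply, Fin.insertNthEquiv,
      Equiv.coe_fn_symm_mk]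
    rw [hsum]
    rfl
  calc ∫⁻ ξ in Set.pi univ (fun _ : Fin (N+1) => Ioc (0:ℝ) (2 * π)),
        ENNReal.ofReal ((K - (2 / n) * ∑ j, Real.cos (ξ j))⁻¹ ^ 2)
      = ∫⁻ ξ in e ⁻¹' ((Ioc (0:ℝ) (2 * π)) ×ˢ (Set.pi univ fun _ : Fin N => Ioc (0:ℝ) (2 * π))),
          g (e ξ) := by rw [← hbox]; exact lintegral_congr (fun ξ => by rw [hcomp ξ])
    _ = ∫⁻ p in (Ioc (0:ℝ) (2 * π)) ×ˢ (Set.pi univ fun _ : Fin N => Ioc (0:ℝ) (2 * π)), g p :=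
        hmp.setLIntegral_comp_preimage_emb (MeasurableEquiv.measurableEmbedding e) g _
    _ = ⊤ := by
        rw [Measure.volume_eq_prod, ← Measure.prod_restrict]
        rw [lintegral_prod_symm g hgmeas.aemeasurable]
        set U := (Set.pi univ fun _ : Fin N => Ioo (0:ℝ) (2*π)) ∩
          {y : Fin N → ℝ | |n / 2 * K - ∑ j, Real.cos (y j)| < 1} with hU
        have hUopen : IsOpen U := by
          apply IsOpen.inter
          · exact isOpen_set_pi finite_univ (fun i _ => isOpen_Ioo)
          · have hcont : Continuous fun y : Fin N → ℝ => |n / 2 * K - ∑ j, Real.cos (y j)| :=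
              (continuous_const.sub
                (continuous_finset_sum _ (fun j _ => Real.continuous_cos.comp (continuous_apply j)))).abs
            exact isOpen_lt hcont continuous_const
        have hy₀ : (fun _ : Fin N => Real.arccos (K/2)) ∈ U := by
          constructor
          · intro j _
            refine ⟨Real.arccos_pos.mpr (by linarith), ?_⟩
            have := Real.arccos_le_pi (K/2)
            linarith
          · have hcos : Real.cos (Real.arccos (K/2)) = K/2 :=
              Real.cos_arccos (by linarith) (by linarith)
            simp only [Set.mem_setOf_eq, hcos, Finset.sum_const, Finset.card_univ,
              Fintype.card_fin, nsmul_eq_mul]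
            have hnn : n = (N:ℝ) + 1 := by rw [hn]; push_cast; ring
            have : n / 2 * K - (N:ℝ) * (K/2) = K/2 := by rw [hnn]; ring
            rw [this]
            rw [abs_div]
            rw [abs_of_pos (by norm_num : (0:ℝ) < 2)]
            linarith [abs_lt.mpr ⟨hK1, hK2⟩]
        have hUpos : (0:ℝ≥0∞) < volume U := hUopen.measure_pos volume ⟨_, hy₀⟩
        have hinner : ∀ y ∈ U, (∫⁻ x in Ioc (0:ℝ) (2*π), g (x, y)) = ⊤ := by
          intro y hy
          have hb : |n / 2 * K - ∑ j, Real.cos (y j)| < 1 := hy.2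
          have hrw : ∀ x : ℝ, K - 2 / n * (Real.cos x + ∑ j, Real.cos (y j))
              = 2 / n * ((n / 2 * K - ∑ j, Real.cos (y j)) - Real.cos x) := by
            intro x
            field_simp
            ring
          simp only [hg]
          calc ∫⁻ x in Ioc (0:ℝ) (2*π),
                ENNReal.ofReal ((K - 2 / n * (Real.cos x + ∑ j, Real.cos (y j)))⁻¹ ^ 2)
              = ∫⁻ x in Ioc (0:ℝ) (2*π),
                ENNReal.ofReal ((2 / n * ((n / 2 * K - ∑ j, Real.cos (y j)) - Real.cos x))⁻¹ ^ 2) :=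
                lintegral_congr fun x => by rw [hrw x]
            _ = ⊤ := one_dim_cos _ _ hb (by positivity)
        have hUsub : U ⊆ Set.pi univ fun _ : Fin N => Ioc (0:ℝ) (2*π) :=
          fun y hy j _ => Ioo_subset_Ioc_self (hy.1 j (mem_univ j))
        refine top_le_iff.mp ?_
        calc (⊤:ℝ≥0∞) = ⊤ * volume U := (ENNReal.top_mul hUpos.ne').symm
          _ = ∫⁻ _ in U, (⊤:ℝ≥0∞) := (setLIntegral_const _ _).symm
          _ ≤ ∫⁻ y in U, ∫⁻ x in Ioc (0:ℝ) (2*π), g (x, y) :=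
              setLIntegral_mono' hUopen.measurableSet (fun y hy => by rw [hinner y hy])
          _ ≤ ∫⁻ y in Set.pi univ fun _ : Fin N => Ioc (0:ℝ) (2*π),
                ∫⁻ x in Ioc (0:ℝ) (2*π), g (x, y) := lintegral_mono_set hUsub

/-- For `1 ≤ n ≤ 4`, `ξ ↦ 1/a(ξ,ω)` with
`a(ξ,ω) = (2+τ²m²)cos ω − (2/n)Σ_j cos ξ_j` belongs to `L²(𝕋ⁿ)` if and only if
`ω` lies in the spectral gaps, i.e. `|cos ω| > (1+τ²m²/2)⁻¹`
(equivalently `ω ∈ (−ω_m, ω_m) ∪ (π−ω_m, π+ω_m)` with `ω_m = arccos((1+τ²m²/2)⁻¹)`). -/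
theorem stmt12 (n : ℕ) (hn1 : 1 ≤ n) (hn4 : n ≤ 4) (τ m ω : ℝ) (hτ : 0 < τ) (hm : 0 < m) :
    MemLp (fun ξ : Fin n → ℝ =>
        ((2 + τ ^ 2 * m ^ 2) * Real.cos ω - (2 / n) * ∑ j, Real.cos (ξ j))⁻¹) 2
        (volume.restrict (Set.pi Set.univ fun _ : Fin n => Set.Ioc (0 : ℝ) (2 * Real.pi)))
      ↔ (1 + τ ^ 2 * m ^ 2 / 2)⁻¹ < |Real.cos ω| := by
  have hπ : (0:ℝ) < π := Real.pi_pos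
  have hnR : (0:ℝ) < (n:ℝ) := by exact_mod_cast hn1
  set K : ℝ := (2 + τ ^ 2 * m ^ 2) * Real.cos ω with hK
  set box : Set (Fin n → ℝ) := Set.pi Set.univ fun _ : Fin n => Set.Ioc (0 : ℝ) (2 * π) with hbox
  have hC : (0:ℝ) < 2 + τ ^ 2 * m ^ 2 := by positivity
  have hiff : ((1 + τ ^ 2 * m ^ 2 / 2)⁻¹ < |Real.cos ω|) ↔ 2 < |K| := by
    have hCinv : (1 + τ ^ 2 * m ^ 2 / 2)⁻¹ = 2 / (2 + τ ^ 2 * m ^ 2) := by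
      rw [show (1 + τ ^ 2 * m ^ 2 / 2) = (2 + τ ^ 2 * m ^ 2) / 2 by ring, inv_div]
    rw [hCinv, hK, abs_mul, abs_of_pos hC, div_lt_iff₀ hC, mul_comm]
  rw [hiff]
  have hmeasb : Measurable (fun ξ : Fin n → ℝ => (K - (2 / (n:ℝ)) * ∑ j, Real.cos (ξ j))⁻¹) := by
    apply Measurable.inv
    apply Measurable.const_sub
    apply Measurable.const_mul
    exact Finset.measurable_sum Finset.univ
      (fun j _ => Real.measurable_cos.comp (measurable_pi_apply j))
  have hboxmeas : MeasurableSet box := MeasurableSet.univ_pi (fun _ => measurableSet_Ioc)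
  constructor
  · -- hard direction
    intro hmem
    by_contra hnot
    push_neg at hnot
    have hK2 : |K| ≤ 2 := hnot
    -- divergence of the lintegral
    have hdiv : ∫⁻ ξ in box, ENNReal.ofReal ((K - (2 / (n:ℝ)) * ∑ j, Real.cos (ξ j))⁻¹ ^ 2) = ⊤ := by
      rcases lt_or_eq_of_le hK2 with hlt | heq
      · obtain ⟨N, rfl⟩ : ∃ N, n = N + 1 := ⟨n - 1, (Nat.succ_pred_eq_of_pos hn1).symm⟩
        exact interior_div N K hlt
      · -- edge case : |K| = 2
        rcases abs_eq (by norm_num : (0:ℝ) ≤ 2) |>.mp heq with h2 | h2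
        · -- K = 2, θ = 2π
          apply edge_div n hn1 hn4 (2 * π) (by linarith) le_rfl
          · intro ξ hmem'
            have hrw : K - (2 / (n:ℝ)) * ∑ j, Real.cos (ξ j)
                = (2 / (n:ℝ)) * ∑ j, (1 - Real.cos (ξ j)) := by
              rw [h2, Finset.sum_sub_distrib, Finset.sum_const, Finset.card_univ,
                Fintype.card_fin, nsmul_eq_mul, mul_one, mul_sub]
              field_simp
            rw [hrw]
            have hpos : 0 < ∑ j, (1 - Real.cos (ξ j)) := by
              apply Finset.sum_pos'
              · intro j _; linarith [Real.cos_le_one (ξ j)]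
              · refine ⟨⟨0, hn1⟩, Finset.mem_univ _, ?_⟩
                have hx := hmem' ⟨0, hn1⟩
                have hcos : Real.cos (ξ ⟨0, hn1⟩) < 1 := by
                  have h1 : Real.cos (2 * π - ξ ⟨0, hn1⟩) < Real.cos 0 := by
                    apply Real.strictAntiOn_cos
                    · exact ⟨le_rfl, hπ.le⟩
                    · constructor
                      · linarith [hx.2]
                      · linarith [hx.1]
                    · linarith [hx.2]
                  rw [Real.cos_two_pi_sub, Real.cos_zero] at h1
                  exact h1
                linarith
            positivity
          · intro ξ
            have hrw : K - (2 / (n:ℝ)) * ∑ j, Real.cos (ξ j)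
                = (2 / (n:ℝ)) * ∑ j, (1 - Real.cos (ξ j)) := by
              rw [h2, Finset.sum_sub_distrib, Finset.sum_const, Finset.card_univ,
                Fintype.card_fin, nsmul_eq_mul, mul_one, mul_sub]
              field_simp
            rw [hrw, abs_of_nonneg (by
              apply mul_nonneg (by positivity)
              apply Finset.sum_nonneg
              intro j _
              linarith [Real.cos_le_one (ξ j)])]
            calc (2 / (n:ℝ)) * ∑ j, (1 - Real.cos (ξ j))
                ≤ (2 / (n:ℝ)) * ∑ j, ((ξ j - 2 * π) ^ 2 / 2) := by
                  apply mul_le_mul_of_nonneg_left _ (by positivity)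
                  apply Finset.sum_le_sum
                  intro j _
                  have := Real.one_sub_sq_div_two_le_cos (x := ξ j - 2 * π)
                  rw [Real.cos_sub_two_pi] at this
                  linarith
              _ = (1 / (n:ℝ)) * ∑ j, (ξ j - 2 * π) ^ 2 := by
                  rw [Finset.mul_sum, Finset.mul_sum]
                  apply Finset.sum_congr rfl
                  intro j _
                  ring
        · -- K = -2, θ = π
          apply edge_div n hn1 hn4 π le_rfl (by linarith)
          · intro ξ hmem'
            have hrw : K - (2 / (n:ℝ)) * ∑ j, Real.cos (ξ j)
                = -((2 / (n:ℝ)) * ∑ j, (1 + Real.cos (ξ j))) := by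
              rw [h2, Finset.sum_add_distrib, Finset.sum_const, Finset.card_univ,
                Fintype.card_fin, nsmul_eq_mul, mul_one, mul_add]
              field_simp
              ring
            rw [hrw, neg_ne_zero]
            have hpos : 0 < ∑ j, (1 + Real.cos (ξ j)) := by
              apply Finset.sum_pos'
              · intro j _; linarith [Real.neg_one_le_cos (ξ j)]
              · refine ⟨⟨0, hn1⟩, Finset.mem_univ _, ?_⟩
                have hx := hmem' ⟨0, hn1⟩
                have hcos : Real.cos π < Real.cos (ξ ⟨0, hn1⟩) := by
                  apply Real.strictAntiOn_cos
                  · constructor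
                    · linarith [hx.1]
                    · linarith [hx.2]
                  · exact ⟨hπ.le, le_rfl⟩
                  · exact hx.2
                rw [Real.cos_pi] at hcos
                linarith
            positivity
          · intro ξ
            have hrw : K - (2 / (n:ℝ)) * ∑ j, Real.cos (ξ j)
                = -((2 / (n:ℝ)) * ∑ j, (1 + Real.cos (ξ j))) := by
              rw [h2, Finset.sum_add_distrib, Finset.sum_const, Finset.card_univ,
                Fintype.card_fin, nsmul_eq_mul, mul_one, mul_add]
              field_simp
              ring
            rw [hrw, abs_neg, abs_of_nonneg (by
              apply mul_nonneg (by positivity)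
              apply Finset.sum_nonneg
              intro j _
              linarith [Real.neg_one_le_cos (ξ j)])]
            calc (2 / (n:ℝ)) * ∑ j, (1 + Real.cos (ξ j))
                ≤ (2 / (n:ℝ)) * ∑ j, ((ξ j - π) ^ 2 / 2) := by
                  apply mul_le_mul_of_nonneg_left _ (by positivity)
                  apply Finset.sum_le_sum
                  intro j _
                  have := Real.one_sub_sq_div_two_le_cos (x := ξ j - π)
                  rw [Real.cos_sub_pi] at this
                  linarith
              _ = (1 / (n:ℝ)) * ∑ j, (ξ j - π) ^ 2 := by
                  rw [Finset.mul_sum, Finset.mul_sum]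
                  apply Finset.sum_congr rfl
                  intro j _
                  ring
    -- contradiction with integrability
    have hint : Integrable
        (fun ξ : Fin n → ℝ => ((K - (2 / (n:ℝ)) * ∑ j, Real.cos (ξ j))⁻¹) ^ 2)
        (volume.restrict box) :=
      (memLp_two_iff_integrable_sq hmem.aestronglyMeasurable).mp hmem
    have hfin : (∫⁻ ξ in box, (‖((K - (2 / (n:ℝ)) * ∑ j, Real.cos (ξ j))⁻¹) ^ 2‖₊ : ℝ≥0∞)) < ⊤ :=
      hint.2
    have heq2 : (∫⁻ ξ in box, (‖((K - (2 / (n:ℝ)) * ∑ j, Real.cos (ξ j))⁻¹) ^ 2‖₊ : ℝ≥0∞))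
        = ∫⁻ ξ in box, ENNReal.ofReal ((K - (2 / (n:ℝ)) * ∑ j, Real.cos (ξ j))⁻¹ ^ 2) :=
      lintegral_congr fun ξ => Real.enorm_eq_ofReal (sq_nonneg _)
    rw [heq2, hdiv] at hfin
    exact lt_irrefl _ hfin
  · -- easy direction
    intro hgap
    have hvol : volume box < ⊤ := by
      rw [hbox, volume_pi_pi]
      simp only [Real.volume_Ioc, sub_zero, Finset.prod_const, Finset.card_univ,
        Fintype.card_fin]
      exact ENNReal.pow_lt_top ENNReal.ofReal_lt_top
    haveI : IsFiniteMeasure (volume.restrict box) :=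
      ⟨by rw [Measure.restrict_apply_univ]; exact hvol⟩
    apply MemLp.of_bound hmeasb.aestronglyMeasurable ((|K| - 2)⁻¹)
    apply ae_of_all
    intro ξ
    have hSle : |(2 / (n:ℝ)) * ∑ j, Real.cos (ξ j)| ≤ 2 := by
      rw [abs_mul, abs_of_nonneg (by positivity : (0:ℝ) ≤ 2 / (n:ℝ))]
      have h1 : |∑ j, Real.cos (ξ j)| ≤ (n:ℝ) := by
        calc |∑ j, Real.cos (ξ j)| ≤ ∑ j, |Real.cos (ξ j)| := Finset.abs_sum_le_sum_abs _ _
          _ ≤ ∑ _j : Fin n, (1:ℝ) := Finset.sum_le_sum (fun j _ => Real.abs_cos_le_one _)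
          _ = (n:ℝ) := by
            rw [Finset.sum_const, Finset.card_univ, Fintype.card_fin, nsmul_eq_mul, mul_one]
      calc (2 / (n:ℝ)) * |∑ j, Real.cos (ξ j)| ≤ (2 / (n:ℝ)) * (n:ℝ) :=
            mul_le_mul_of_nonneg_left h1 (by positivity)
        _ = 2 := by field_simp
    have hlow : |K| - 2 ≤ |K - (2 / (n:ℝ)) * ∑ j, Real.cos (ξ j)| := by
      calc |K| - 2 ≤ |K| - |(2 / (n:ℝ)) * ∑ j, Real.cos (ξ j)| := by linarith
        _ ≤ |K - (2 / (n:ℝ)) * ∑ j, Real.cos (ξ j)| := abs_sub_abs_le_abs_sub _ _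
    rw [Real.norm_eq_abs, abs_inv]
    exact inv_anti₀ (by linarith) hlow
end

section
/- Suppose τ/ε = 1/√n and ψ: ℤⁿ × ℤ → ℂ with ψ^T ∈ l²(ℤⁿ) for all T satisfies (ψ_X^{T+1}+ψ_X^{T−1})·(1 + τ² B_X(|ψ_X^{T+1}|², |ψ_X^{T−1}|²)) = (1/n) Σ_{j=1}^n (ψ_{X+e_j}^T + ψ_{X−e_j}^T) for all X, T, where each B_X(λ,μ) is real-valued. Then the discrete charge Q^T = (i/(4τ)) Σ_{X∈ℤⁿ} Σ_{j=1}^n εⁿ [ conj(ψ_{X+e_j}^T)ψ_X^{T+1} + conj(ψ_{X−e_j}^T)ψ_X^{T+1} − conj(ψ_X^{T+1})ψ_{X+e_j}^T − conj(ψ_X^{T+1})ψ_{X−e_j}^T ] satisfies Q^T = Q^{T−1} for all T ∈ ℤ. -/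
private lemma l2mul {n : ℕ} {a b : (Fin n → ℤ) → ℂ}
    (ha : Summable fun X => ‖a X‖ ^ 2)
    (hb : Summable fun X => ‖b X‖ ^ 2) :
    Summable fun X => (starRingEnd ℂ) (a X) * b X := by
  apply Summable.of_norm
  have hle : ∀ X : Fin n → ℤ, ‖(starRingEnd ℂ) (a X) * b X‖
      ≤ (‖a X‖ ^ 2 + ‖b X‖ ^ 2) / 2 := by
    intro X
    rw [norm_mul, starRingEnd_apply, norm_star]
    nlinarith [sq_nonneg (‖a X‖ - ‖b X‖), norm_nonneg (a X),
      norm_nonneg (b X)]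
  exact Summable.of_nonneg_of_le (fun X => norm_nonneg _) hle ((ha.add hb).div_const 2)

private lemma conj_pair_tsum {n : ℕ} (a b : (Fin n → ℤ) → ℂ) :
    (starRingEnd ℂ) (∑' X, (starRingEnd ℂ) (a X) * b X)
      = ∑' X, (starRingEnd ℂ) (b X) * a X := by
  rw [starRingEnd_apply, tsum_star]
  exact tsum_congr fun X => by
    simp only [starRingEnd_apply, star_mul', star_star]; exact mul_comm _ _

private lemma shift_add {n : ℕ} (f h : (Fin n → ℤ) → ℂ) (v : Fin n → ℤ) :
    ∑' X, (starRingEnd ℂ) (f X) * h (X + v)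
      = ∑' X, (starRingEnd ℂ) (f (X - v)) * h X := by
  have := Equiv.tsum_eq (Equiv.addRight v) (fun X => (starRingEnd ℂ) (f (X - v)) * h X)
  simp only [Equiv.coe_addRight, add_sub_cancel_right] at this
  exact this

private lemma shift_sub {n : ℕ} (f h : (Fin n → ℤ) → ℂ) (v : Fin n → ℤ) :
    ∑' X, (starRingEnd ℂ) (f X) * h (X - v)
      = ∑' X, (starRingEnd ℂ) (f (X + v)) * h X := by
  have := Equiv.tsum_eq (Equiv.subRight v) (fun X => (starRingEnd ℂ) (f (X + v)) * h X)
  simp only [Equiv.subRight_apply, sub_add_cancel] at this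
  exact this


private lemma conj_pair_shift {n : ℕ} (a g : (Fin n → ℤ) → ℂ) (w : (Fin n → ℤ) → (Fin n → ℤ)) :
    (starRingEnd ℂ) (∑' X, (starRingEnd ℂ) (a (w X)) * g X)
      = ∑' X, (starRingEnd ℂ) (g X) * a (w X) := by
  rw [starRingEnd_apply, tsum_star]
  exact tsum_congr fun X => by
    simp only [starRingEnd_apply, star_mul', star_star]; exact mul_comm _ _

private lemma conj_pair_add {n : ℕ} (a g : (Fin n → ℤ) → ℂ) (v : Fin n → ℤ) :
    (starRingEnd ℂ) (∑' X, (starRingEnd ℂ) (a (X + v)) * g X)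
      = ∑' X, (starRingEnd ℂ) (g X) * a (X + v) :=
  conj_pair_shift a g (fun X => X + v)

private lemma conj_pair_sub {n : ℕ} (a g : (Fin n → ℤ) → ℂ) (v : Fin n → ℤ) :
    (starRingEnd ℂ) (∑' X, (starRingEnd ℂ) (a (X - v)) * g X)
      = ∑' X, (starRingEnd ℂ) (g X) * a (X - v) :=
  conj_pair_shift a g (fun X => X - v)

set_option maxHeartbeats 1000000 in
private lemma key {n : ℕ} (r : (Fin n → ℤ) → ℝ) (f g h : (Fin n → ℤ) → ℂ)
    (hf : Summable fun X => ‖f X‖ ^ 2)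
    (hg : Summable fun X => ‖g X‖ ^ 2)
    (hh : Summable fun X => ‖h X‖ ^ 2)
    (heq : ∀ X, (∑ j : Fin n, (f (X + Pi.single j 1) + f (X - Pi.single j 1)))
      = (n : ℂ) * (r X : ℂ) * (g X + h X)) :
    (∑' X : Fin n → ℤ, ∑ j : Fin n,
      ((starRingEnd ℂ) (f (X + Pi.single j 1)) * g X
        + (starRingEnd ℂ) (f (X - Pi.single j 1)) * g X
        - (starRingEnd ℂ) (g X) * f (X + Pi.single j 1)
        - (starRingEnd ℂ) (g X) * f (X - Pi.single j 1)))
    = (∑' X : Fin n → ℤ, ∑ j : Fin n,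
      ((starRingEnd ℂ) (h (X + Pi.single j 1)) * f X
        + (starRingEnd ℂ) (h (X - Pi.single j 1)) * f X
        - (starRingEnd ℂ) (f X) * h (X + Pi.single j 1)
        - (starRingEnd ℂ) (f X) * h (X - Pi.single j 1))) := by
  classical
  have hfp : ∀ v : Fin n → ℤ, Summable fun X => ‖f (X + v)‖ ^ 2 :=
    fun v => hf.comp_injective (add_left_injective v)
  have hfm : ∀ v : Fin n → ℤ, Summable fun X => ‖f (X - v)‖ ^ 2 :=
    fun v => hf.comp_injective sub_left_injective
  have hhp : ∀ v : Fin n → ℤ, Summable fun X => ‖h (X + v)‖ ^ 2 :=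
    fun v => hh.comp_injective (add_left_injective v)
  have hhm : ∀ v : Fin n → ℤ, Summable fun X => ‖h (X - v)‖ ^ 2 :=
    fun v => hh.comp_injective sub_left_injective
  have SP : ∀ j : Fin n, Summable fun X => (starRingEnd ℂ) (f (X + Pi.single j 1)) * g X :=
    fun j => l2mul (hfp _) hg
  have SM : ∀ j : Fin n, Summable fun X => (starRingEnd ℂ) (f (X - Pi.single j 1)) * g X :=
    fun j => l2mul (hfm _) hg
  have SgP : ∀ j : Fin n, Summable fun X => (starRingEnd ℂ) (g X) * f (X + Pi.single j 1) :=
    fun j => l2mul hg (hfp _)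
  have SgM : ∀ j : Fin n, Summable fun X => (starRingEnd ℂ) (g X) * f (X - Pi.single j 1) :=
    fun j => l2mul hg (hfm _)
  have SPh : ∀ j : Fin n, Summable fun X => (starRingEnd ℂ) (f (X + Pi.single j 1)) * h X :=
    fun j => l2mul (hfp _) hh
  have SMh : ∀ j : Fin n, Summable fun X => (starRingEnd ℂ) (f (X - Pi.single j 1)) * h X :=
    fun j => l2mul (hfm _) hh
  have SP' : ∀ j : Fin n, Summable fun X => (starRingEnd ℂ) (h (X + Pi.single j 1)) * f X :=
    fun j => l2mul (hhp _) hf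
  have SM' : ∀ j : Fin n, Summable fun X => (starRingEnd ℂ) (h (X - Pi.single j 1)) * f X :=
    fun j => l2mul (hhm _) hf
  have SfP : ∀ j : Fin n, Summable fun X => (starRingEnd ℂ) (f X) * h (X + Pi.single j 1) :=
    fun j => l2mul hf (hhp _)
  have SfM : ∀ j : Fin n, Summable fun X => (starRingEnd ℂ) (f X) * h (X - Pi.single j 1) :=
    fun j => l2mul hf (hhm _)
  have hL : (∑' X : Fin n → ℤ, ∑ j : Fin n,
      ((starRingEnd ℂ) (f (X + Pi.single j 1)) * g X
        + (starRingEnd ℂ) (f (X - Pi.single j 1)) * g X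
        - (starRingEnd ℂ) (g X) * f (X + Pi.single j 1)
        - (starRingEnd ℂ) (g X) * f (X - Pi.single j 1)))
      = ∑ j : Fin n, ((∑' X, (starRingEnd ℂ) (f (X + Pi.single j 1)) * g X) + (∑' X, (starRingEnd ℂ) (f (X - Pi.single j 1)) * g X) - (starRingEnd ℂ) (∑' X, (starRingEnd ℂ) (f (X + Pi.single j 1)) * g X) - (starRingEnd ℂ) (∑' X, (starRingEnd ℂ) (f (X - Pi.single j 1)) * g X)) := by
    rw [Summable.tsum_finsetSum (fun j _ => (((SP j).add (SM j)).sub (SgP j)).sub (SgM j))]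
    refine Finset.sum_congr rfl fun j _ => ?_
    rw [Summable.tsum_sub (((SP j).add (SM j)).sub (SgP j)) (SgM j),
      Summable.tsum_sub ((SP j).add (SM j)) (SgP j), Summable.tsum_add (SP j) (SM j),
      conj_pair_add f g (Pi.single j 1),
      conj_pair_sub f g (Pi.single j 1)]
  have hR : (∑' X : Fin n → ℤ, ∑ j : Fin n,
      ((starRingEnd ℂ) (h (X + Pi.single j 1)) * f X
        + (starRingEnd ℂ) (h (X - Pi.single j 1)) * f X
        - (starRingEnd ℂ) (f X) * h (X + Pi.single j 1)
        - (starRingEnd ℂ) (f X) * h (X - Pi.single j 1)))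
      = ∑ j : Fin n, ((∑' X, (starRingEnd ℂ) (h (X + Pi.single j 1)) * f X) + (∑' X, (starRingEnd ℂ) (h (X - Pi.single j 1)) * f X) - (starRingEnd ℂ) (∑' X, (starRingEnd ℂ) (h (X + Pi.single j 1)) * f X) - (starRingEnd ℂ) (∑' X, (starRingEnd ℂ) (h (X - Pi.single j 1)) * f X)) := by
    rw [Summable.tsum_finsetSum (fun j _ => (((SP' j).add (SM' j)).sub (SfP j)).sub (SfM j))]
    refine Finset.sum_congr rfl fun j _ => ?_
    rw [Summable.tsum_sub (((SP' j).add (SM' j)).sub (SfP j)) (SfM j),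
      Summable.tsum_sub ((SP' j).add (SM' j)) (SfP j), Summable.tsum_add (SP' j) (SM' j),
      conj_pair_add h f (Pi.single j 1),
      conj_pair_sub h f (Pi.single j 1)]
  have hcP' : ∀ j : Fin n, (starRingEnd ℂ) (∑' X, (starRingEnd ℂ) (h (X + Pi.single j 1)) * f X) = (∑' X, (starRingEnd ℂ) (f (X - Pi.single j 1)) * h X) := by
    intro j
    rw [conj_pair_add h f (Pi.single j 1)]
    exact shift_add f h _
  have hcM' : ∀ j : Fin n, (starRingEnd ℂ) (∑' X, (starRingEnd ℂ) (h (X - Pi.single j 1)) * f X) = (∑' X, (starRingEnd ℂ) (f (X + Pi.single j 1)) * h X) := by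
    intro j
    rw [conj_pair_sub h f (Pi.single j 1)]
    exact shift_sub f h _
  have hK : ∑ j : Fin n, ((∑' X, (starRingEnd ℂ) (f (X + Pi.single j 1)) * g X) + (∑' X, (starRingEnd ℂ) (f (X - Pi.single j 1)) * g X) + (starRingEnd ℂ) (∑' X, (starRingEnd ℂ) (h (X + Pi.single j 1)) * f X) + (starRingEnd ℂ) (∑' X, (starRingEnd ℂ) (h (X - Pi.single j 1)) * f X))
      = ∑' X : Fin n → ℤ,
          (starRingEnd ℂ) ((n : ℂ) * (r X : ℂ) * (g X + h X)) * (g X + h X) := by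
    have step1 : ∑ j : Fin n, ((∑' X, (starRingEnd ℂ) (f (X + Pi.single j 1)) * g X) + (∑' X, (starRingEnd ℂ) (f (X - Pi.single j 1)) * g X) + (starRingEnd ℂ) (∑' X, (starRingEnd ℂ) (h (X + Pi.single j 1)) * f X) + (starRingEnd ℂ) (∑' X, (starRingEnd ℂ) (h (X - Pi.single j 1)) * f X))
        = ∑ j : Fin n, ∑' X,
          (((starRingEnd ℂ) (f (X + Pi.single j 1)) * g X + (starRingEnd ℂ) (f (X - Pi.single j 1)) * g X)
            + (starRingEnd ℂ) (f (X - Pi.single j 1)) * h X + (starRingEnd ℂ) (f (X + Pi.single j 1)) * h X) := by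
      refine Finset.sum_congr rfl fun j _ => ?_
      rw [hcP' j, hcM' j, ← Summable.tsum_add (SP j) (SM j),
        ← Summable.tsum_add ((SP j).add (SM j)) (SMh j),
        ← Summable.tsum_add (((SP j).add (SM j)).add (SMh j)) (SPh j)]
    rw [step1, ← Summable.tsum_finsetSum (fun j _ => (((SP j).add (SM j)).add (SMh j)).add (SPh j))]
    refine tsum_congr fun X => ?_
    have expand : ∑ j : Fin n,
        (((starRingEnd ℂ) (f (X + Pi.single j 1)) * g X + (starRingEnd ℂ) (f (X - Pi.single j 1)) * g X)
          + (starRingEnd ℂ) (f (X - Pi.single j 1)) * h X + (starRingEnd ℂ) (f (X + Pi.single j 1)) * h X)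
        = (starRingEnd ℂ) (∑ j : Fin n, (f (X + Pi.single j 1) + f (X - Pi.single j 1))) * (g X + h X) := by
      rw [map_sum, Finset.sum_mul]
      refine Finset.sum_congr rfl fun j _ => ?_
      rw [map_add]; ring
    rw [expand, heq X]
  have hreal : (starRingEnd ℂ) (∑' X : Fin n → ℤ,
        (starRingEnd ℂ) ((n : ℂ) * (r X : ℂ) * (g X + h X)) * (g X + h X))
      = ∑' X : Fin n → ℤ,
        (starRingEnd ℂ) ((n : ℂ) * (r X : ℂ) * (g X + h X)) * (g X + h X) := by
    rw [starRingEnd_apply, tsum_star]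
    refine tsum_congr fun X => ?_
    simp only [starRingEnd_apply, star_mul', star_star, map_mul]
    simp only [star_natCast, Complex.star_def, Complex.conj_ofReal]
    ring
  rw [hL, hR]
  have hKconj : (starRingEnd ℂ)
        (∑ j : Fin n, ((∑' X, (starRingEnd ℂ) (f (X + Pi.single j 1)) * g X) + (∑' X, (starRingEnd ℂ) (f (X - Pi.single j 1)) * g X) + (starRingEnd ℂ) (∑' X, (starRingEnd ℂ) (h (X + Pi.single j 1)) * f X) + (starRingEnd ℂ) (∑' X, (starRingEnd ℂ) (h (X - Pi.single j 1)) * f X)))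
      = ∑ j : Fin n, ((∑' X, (starRingEnd ℂ) (f (X + Pi.single j 1)) * g X) + (∑' X, (starRingEnd ℂ) (f (X - Pi.single j 1)) * g X) + (starRingEnd ℂ) (∑' X, (starRingEnd ℂ) (h (X + Pi.single j 1)) * f X) + (starRingEnd ℂ) (∑' X, (starRingEnd ℂ) (h (X - Pi.single j 1)) * f X)) := by
    rw [hK]; exact hreal
  rw [map_sum] at hKconj
  simp only [map_add, Complex.conj_conj] at hKconj
  have goal' : ∑ j : Fin n, ((∑' X, (starRingEnd ℂ) (f (X + Pi.single j 1)) * g X) + (∑' X, (starRingEnd ℂ) (f (X - Pi.single j 1)) * g X) - (starRingEnd ℂ) (∑' X, (starRingEnd ℂ) (f (X + Pi.single j 1)) * g X) - (starRingEnd ℂ) (∑' X, (starRingEnd ℂ) (f (X - Pi.single j 1)) * g X))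
      - ∑ j : Fin n, ((∑' X, (starRingEnd ℂ) (h (X + Pi.single j 1)) * f X) + (∑' X, (starRingEnd ℂ) (h (X - Pi.single j 1)) * f X) - (starRingEnd ℂ) (∑' X, (starRingEnd ℂ) (h (X + Pi.single j 1)) * f X) - (starRingEnd ℂ) (∑' X, (starRingEnd ℂ) (h (X - Pi.single j 1)) * f X))
      = ∑ j : Fin n, ((∑' X, (starRingEnd ℂ) (f (X + Pi.single j 1)) * g X) + (∑' X, (starRingEnd ℂ) (f (X - Pi.single j 1)) * g X) + (starRingEnd ℂ) (∑' X, (starRingEnd ℂ) (h (X + Pi.single j 1)) * f X) + (starRingEnd ℂ) (∑' X, (starRingEnd ℂ) (h (X - Pi.single j 1)) * f X))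
      - ∑ j : Fin n, ((starRingEnd ℂ) (∑' X, (starRingEnd ℂ) (f (X + Pi.single j 1)) * g X) + (starRingEnd ℂ) (∑' X, (starRingEnd ℂ) (f (X - Pi.single j 1)) * g X) + (∑' X, (starRingEnd ℂ) (h (X + Pi.single j 1)) * f X) + (∑' X, (starRingEnd ℂ) (h (X - Pi.single j 1)) * f X)) := by
    rw [← Finset.sum_sub_distrib, ← Finset.sum_sub_distrib]
    exact Finset.sum_congr rfl fun j _ => by ring
  have hz : ∑ j : Fin n, ((∑' X, (starRingEnd ℂ) (f (X + Pi.single j 1)) * g X) + (∑' X, (starRingEnd ℂ) (f (X - Pi.single j 1)) * g X) - (starRingEnd ℂ) (∑' X, (starRingEnd ℂ) (f (X + Pi.single j 1)) * g X) - (starRingEnd ℂ) (∑' X, (starRingEnd ℂ) (f (X - Pi.single j 1)) * g X))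
      - ∑ j : Fin n, ((∑' X, (starRingEnd ℂ) (h (X + Pi.single j 1)) * f X) + (∑' X, (starRingEnd ℂ) (h (X - Pi.single j 1)) * f X) - (starRingEnd ℂ) (∑' X, (starRingEnd ℂ) (h (X + Pi.single j 1)) * f X) - (starRingEnd ℂ) (∑' X, (starRingEnd ℂ) (h (X - Pi.single j 1)) * f X)) = 0 := by
    rw [goal', hKconj, sub_self]
  exact sub_eq_zero.mp hz


/-- The discrete charge
`Q^T = (i/(4τ)) Σ_X Σ_j εⁿ [ conj(ψ_{X+e_j}^T)ψ_X^{T+1} + conj(ψ_{X−e_j}^T)ψ_X^{T+1}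
  − conj(ψ_X^{T+1})ψ_{X+e_j}^T − conj(ψ_X^{T+1})ψ_{X−e_j}^T ]`. -/
noncomputable def discreteCharge (n : ℕ) (τ ε : ℝ) (ψ : (Fin n → ℤ) → ℤ → ℂ)
    (T : ℤ) : ℂ :=
  (Complex.I / (4 * (τ : ℂ))) *
    ∑' X : Fin n → ℤ, ∑ j : Fin n, ((ε ^ n : ℝ) : ℂ) *
      ((starRingEnd ℂ) (ψ (X + Pi.single j 1) T) * ψ X (T + 1)
        + (starRingEnd ℂ) (ψ (X - Pi.single j 1) T) * ψ X (T + 1)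
        - (starRingEnd ℂ) (ψ X (T + 1)) * ψ (X + Pi.single j 1) T
        - (starRingEnd ℂ) (ψ X (T + 1)) * ψ (X - Pi.single j 1) T)

/-- Charge conservation for the Strauss–Vazquez scheme under the critical grid ratio
`τ/ε = 1/√n`: if `ψ^T ∈ l²(ℤⁿ)` satisfies
`(ψ_X^{T+1}+ψ_X^{T−1})(1 + τ² B_X(|ψ_X^{T+1}|², |ψ_X^{T−1}|²))
  = (1/n) Σ_j (ψ_{X+e_j}^T + ψ_{X−e_j}^T)` with `B_X` real-valued, then
`Q^T = Q^{T−1}` for all `T`. -/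
theorem stmt18 (n : ℕ) (hn : 0 < n) (τ ε : ℝ) (hτ : 0 < τ)
    (hε : τ / ε = 1 / Real.sqrt n)
    (B : (Fin n → ℤ) → ℝ → ℝ → ℝ)
    (ψ : (Fin n → ℤ) → ℤ → ℂ)
    (hl2 : ∀ T : ℤ, Summable fun X : Fin n → ℤ => ‖ψ X T‖ ^ 2)
    (heq : ∀ (X : Fin n → ℤ) (T : ℤ),
      (ψ X (T + 1) + ψ X (T - 1)) *
        (1 + (τ : ℂ) ^ 2 * Complex.ofReal
          (B X (‖ψ X (T + 1)‖ ^ 2) (‖ψ X (T - 1)‖ ^ 2)))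
      = (1 / (n : ℂ)) * ∑ j : Fin n,
          (ψ (X + Pi.single j 1) T + ψ (X - Pi.single j 1) T)) :
    ∀ T : ℤ, discreteCharge n τ ε ψ T = discreteCharge n τ ε ψ (T - 1) := by
  intro T
  unfold discreteCharge
  have hT : T - 1 + 1 = T := by ring
  rw [hT]
  simp only [← Finset.mul_sum]
  rw [tsum_mul_left, tsum_mul_left]
  congr 2
  have hr : ∀ X : Fin n → ℤ, ∑ j : Fin n,
        (ψ (X + Pi.single j 1) T + ψ (X - Pi.single j 1) T)
      = (n : ℂ) * (((1 + τ ^ 2 * B X (‖ψ X (T + 1)‖ ^ 2)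
          (‖ψ X (T - 1)‖ ^ 2) : ℝ)) : ℂ) * (ψ X (T + 1) + ψ X (T - 1)) := by
    intro X
    have hn0 : (n : ℂ) ≠ 0 := Nat.cast_ne_zero.mpr hn.ne'
    have e1 := heq X T
    field_simp at e1
    push_cast
    linear_combination -e1
  exact key (fun X => 1 + τ ^ 2 * B X (‖ψ X (T + 1)‖ ^ 2)
      (‖ψ X (T - 1)‖ ^ 2))
    (fun X => ψ X T) (fun X => ψ X (T + 1)) (fun X => ψ X (T - 1))
    (hl2 T) (hl2 (T + 1)) (hl2 (T - 1)) hr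
end
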